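/- Let k be a field, n ≥ 1, f a permutation of {1,…,n}, and A = A(k,X,r_f). Let R = k[x₁] denote the subalgebra of A generated by x₁. Then R is isomorphic to the polynomial algebra k[t] in one variable, and A is a free left R-module of rank n with free basis {1, x₂, x₃, …, x_n}. -/

import Mathlib

noncomputable section

open FreeAlgebra

/-- The defining relations of the Yang–Baxter algebra of the permutation idempotent
solution `r_f(x,y) = (f(y), y)`. -/
def ybRel (k : Type*) [Field k] (n : ℕ) (f : Equiv.Perm (Fin n)) :
    FreeAlgebra k (Fin n) → FreeAlgebra k (Fin n) → Prop :=
  fun a b => ∃ j p : Fin n, a = ι k j * ι k p ∧ b = ι k (f p) * ι k p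

/-- The Yang–Baxter algebra `A(k, X, r_f)`. -/
abbrev YBA (k : Type*) [Field k] (n : ℕ) (f : Equiv.Perm (Fin n)) :=
  RingQuot (ybRel k n f)

/-- The image of the generator `x_i` in `A(k, X, r_f)`. -/
def xgen (k : Type*) [Field k] (n : ℕ) (f : Equiv.Perm (Fin n)) (i : Fin n) :
    YBA k n f :=
  RingQuot.mkAlgHom k (ybRel k n f) (ι k i)

namespace Stmt8Aux

/-- Normal-form monomials of positive length: `Gen.mk m p` represents `x₀^m * x_p`
(a word of length `m+1` ending in `x_p`). -/
structure Gen (n : ℕ) where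
  len : ℕ
  idx : Fin n

instance {n : ℕ} : Mul (Gen n) := ⟨fun a b => ⟨a.len + b.len + 1, b.idx⟩⟩

lemma Gen.mul_def {n : ℕ} (a b : Gen n) : a * b = ⟨a.len + b.len + 1, b.idx⟩ := rfl

instance {n : ℕ} : Semigroup (Gen n) where
  mul_assoc a b c := by
    simp only [Gen.mul_def, Gen.mk.injEq]
    exact ⟨by omega, trivial⟩

/-- The monoid of normal-form monomials (with the empty word adjoined). -/
abbrev M (n : ℕ) : Type := WithOne (Gen n)

variable (k : Type*) [Field k] (n : ℕ) [NeZero n] (f : Equiv.Perm (Fin n))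

/-- The model algebra. -/
abbrev B : Type _ := MonoidAlgebra k (M n)

def sing (m : ℕ) (p : Fin n) : B k n := MonoidAlgebra.single (↑(Gen.mk m p)) 1

lemma sing_mul (m l : ℕ) (p q : Fin n) :
    sing k n m p * sing k n l q = sing k n (m + l + 1) q := by
  simp only [sing, MonoidAlgebra.single_mul_single, ← WithOne.coe_mul, Gen.mul_def, one_mul]

def toB : YBA k n f →ₐ[k] B k n :=
  RingQuot.liftAlgHom k ⟨FreeAlgebra.lift k fun i => sing k n 0 i, by
    rintro x y ⟨j, p, rfl, rfl⟩
    simp only [map_mul, FreeAlgebra.lift_ι_apply, sing_mul]⟩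

lemma toB_xgen (i : Fin n) : toB k n f (xgen k n f i) = sing k n 0 i := by
  rw [xgen, toB, RingQuot.liftAlgHom_mkAlgHom_apply, FreeAlgebra.lift_ι_apply]

lemma xrel (j p : Fin n) :
    xgen k n f j * xgen k n f p = xgen k n f (f p) * xgen k n f p := by
  simp only [xgen, ← map_mul]
  exact RingQuot.mkAlgHom_rel k ⟨j, p, rfl, rfl⟩

lemma xswap (a b p : Fin n) :
    xgen k n f a * xgen k n f p = xgen k n f b * xgen k n f p := by
  rw [xrel k n f a p, xrel k n f b p]

lemma xp_pow (p : Fin n) (l : ℕ) :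
    xgen k n f p * xgen k n f 0 ^ (l + 1) = xgen k n f 0 ^ (l + 2) := by
  induction l with
  | zero => rw [pow_one, sq]; exact xswap k n f p 0 0
  | succ l ih =>
      calc xgen k n f p * xgen k n f 0 ^ (l + 2)
          = (xgen k n f p * xgen k n f 0 ^ (l + 1)) * xgen k n f 0 := by
            rw [mul_assoc, ← pow_succ]
        _ = xgen k n f 0 ^ (l + 2) * xgen k n f 0 := by rw [ih]
        _ = xgen k n f 0 ^ (l + 3) := by rw [← pow_succ]

lemma key2 (p q : Fin n) (l : ℕ) :
    xgen k n f p * (xgen k n f 0 ^ l * xgen k n f q)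
      = xgen k n f 0 ^ (l + 1) * xgen k n f q := by
  cases l with
  | zero => rw [pow_zero, one_mul, pow_one]; exact xswap k n f p 0 q
  | succ l => rw [← mul_assoc, xp_pow]

lemma psi0_raw (A Bl : ℕ) (p q : Fin n) :
    (xgen k n f 0 ^ A * xgen k n f p) * (xgen k n f 0 ^ Bl * xgen k n f q)
      = xgen k n f 0 ^ (A + Bl + 1) * xgen k n f q := by
  calc (xgen k n f 0 ^ A * xgen k n f p) * (xgen k n f 0 ^ Bl * xgen k n f q)
      = xgen k n f 0 ^ A * (xgen k n f p * (xgen k n f 0 ^ Bl * xgen k n f q)) :=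
        mul_assoc _ _ _
    _ = xgen k n f 0 ^ A * (xgen k n f 0 ^ (Bl + 1) * xgen k n f q) := by rw [key2]
    _ = (xgen k n f 0 ^ A * xgen k n f 0 ^ (Bl + 1)) * xgen k n f q :=
        (mul_assoc _ _ _).symm
    _ = xgen k n f 0 ^ (A + Bl + 1) * xgen k n f q := by
        rw [← pow_add, ← Nat.add_assoc]

def psi0 : M n →* YBA k n f :=
  WithOne.lift
    { toFun := fun g => xgen k n f 0 ^ g.len * xgen k n f g.idx
      map_mul' := by
        rintro ⟨A, p⟩ ⟨Bl, q⟩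
        exact (psi0_raw k n f A Bl p q).symm }

def psi : B k n →ₐ[k] YBA k n f :=
  MonoidAlgebra.lift k (YBA k n f) (M n) (psi0 k n f)

lemma psi_single (m : ℕ) (p : Fin n) :
    psi k n f (sing k n m p) = xgen k n f 0 ^ m * xgen k n f p := by
  rw [sing, psi, MonoidAlgebra.lift_single, one_smul, psi0, WithOne.lift_coe]
  rfl

lemma sing_pow_mul (m l : ℕ) (p : Fin n) :
    sing k n 0 0 ^ m * sing k n l p = sing k n (m + l) p := by
  induction m generalizing l with
  | zero => rw [pow_zero, one_mul, Nat.zero_add]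
  | succ m ih =>
      rw [pow_succ', mul_assoc, ih, sing_mul]
      have : 0 + (m + l) + 1 = m + 1 + l := by omega
      rw [this]

def pw : ℕ → M n
  | 0 => 1
  | m + 1 => WithOne.coe (Gen.mk m 0)

lemma sing_pow (m : ℕ) :
    sing k n 0 0 ^ m = MonoidAlgebra.single (pw n m) 1 := by
  cases m with
  | zero => rw [pow_zero, pw]; exact MonoidAlgebra.one_def
  | succ m => rw [pow_succ, sing_pow_mul, pw]; rfl

def phi : YBA k n f ≃ₐ[k] B k n :=
  AlgEquiv.ofAlgHom (toB k n f) (psi k n f)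
    (by
      apply MonoidAlgebra.algHom_ext
      intro x
      induction x using WithOne.recOneCoe with
      | one =>
          simp only [AlgHom.coe_comp, Function.comp_apply, AlgHom.coe_id, id_eq,
            ← MonoidAlgebra.one_def, map_one]
      | coe g =>
          obtain ⟨m, p⟩ := g
          have : MonoidAlgebra.single (↑(Gen.mk m p) : M n) (1 : k) = sing k n m p := rfl
          simp only [AlgHom.coe_comp, Function.comp_apply, AlgHom.coe_id, id_eq, this,
            psi_single, map_mul, map_pow, toB_xgen, sing_pow_mul, Nat.add_zero]
      exact Subsingleton.elim _ _)
    (by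
      apply RingQuot.ringQuot_ext'
      apply FreeAlgebra.hom_ext
      funext i
      simp only [Function.comp_apply, AlgHom.coe_comp, AlgHom.coe_id, id_eq]
      show psi k n f (toB k n f (xgen k n f i)) = xgen k n f i
      rw [toB_xgen]
      have := psi_single k n f 0 i
      rwa [pow_zero, one_mul] at this)

lemma phi_xgen (i : Fin n) : phi k n f (xgen k n f i) = sing k n 0 i :=
  toB_xgen k n f i

lemma aeval_eq (g : Polynomial k) :
    (Polynomial.aeval (sing k n 0 0) g : B k n)
      = MonoidAlgebra.ofCoeff (Finsupp.mapDomain (pw n) g.toFinsupp.coeff) := by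
  induction g using Polynomial.induction_on' with
  | add p q hp hq =>
      rw [map_add, hp, hq, Polynomial.toFinsupp_add, AddMonoidAlgebra.coeff_add, Finsupp.mapDomain_add,
          MonoidAlgebra.ofCoeff_add]
  | monomial m c =>
      rw [Polynomial.aeval_monomial, Polynomial.toFinsupp_monomial, AddMonoidAlgebra.coeff_single,
        Finsupp.mapDomain_single, MonoidAlgebra.ofCoeff_single, sing_pow]
      show MonoidAlgebra.single 1 c * MonoidAlgebra.single (pw n m) 1 = _
      rw [MonoidAlgebra.single_mul_single, one_mul, mul_one]

lemma pw_inj : Function.Injective (pw n) := by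
  intro a b h
  cases a with
  | zero =>
      cases b with
      | zero => rfl
      | succ b =>
          simp only [pw] at h
          exact absurd h.symm WithOne.coe_ne_one
  | succ a =>
      cases b with
      | zero =>
          simp only [pw] at h
          exact absurd h WithOne.coe_ne_one
      | succ b =>
          simp only [pw] at h
          rw [WithOne.coe_inj] at h
          exact congrArg Nat.succ (congrArg Gen.len h)

lemma aeval_inj :
    Function.Injective (Polynomial.aeval (xgen k n f 0) : Polynomial k →ₐ[k] YBA k n f) := by
  intro g h hgh
  have e1 := Polynomial.aeval_algHom_apply (phi k n f) (xgen k n f 0) g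
  have e2 := Polynomial.aeval_algHom_apply (phi k n f) (xgen k n f 0) h
  rw [phi_xgen] at e1 e2
  have h2 : (Polynomial.aeval (sing k n 0 0) g : B k n)
      = Polynomial.aeval (sing k n 0 0) h := by
    rw [e1, e2, hgh]
  rw [aeval_eq, aeval_eq] at h2
  exact Polynomial.toFinsupp_injective (AddMonoidAlgebra.coeff_injective
    (Finsupp.mapDomain_injective (pw_inj n) (MonoidAlgebra.ofCoeff_injective h2)))

/-- The index assignment: `EE p m` is the monomial `x₀^m` (if `p = 0`) or
`x₀^m x_p` (if `p ≠ 0`). -/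
def EE (p : Fin n) : ℕ → M n := fun m => if p = 0 then pw n m else ↑(Gen.mk m p)

lemma pw_ne_coe (m l : ℕ) (q : Fin n) (hq : q ≠ 0) : pw n m ≠ ↑(Gen.mk l q) := by
  cases m with
  | zero =>
      simp only [pw]
      intro h
      exact WithOne.coe_ne_one h.symm
  | succ m =>
      simp only [pw]
      intro hcon
      rw [WithOne.coe_inj] at hcon
      exact hq (congrArg Gen.idx hcon).symm

lemma EE_inj2 {p q : Fin n} {m l : ℕ} (h : EE n p m = EE n q l) : p = q ∧ m = l := by
  by_cases hp : p = 0 <;> by_cases hq : q = 0 <;>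
    simp only [EE, hp, hq, if_true, if_false, ite_true, ite_false] at h
  · exact ⟨hp.trans hq.symm, pw_inj n h⟩
  · exact absurd h (pw_ne_coe n _ _ _ hq)
  · exact absurd h.symm (pw_ne_coe n _ _ _ hp)
  · rw [WithOne.coe_inj] at h
    exact ⟨congrArg Gen.idx h, congrArg Gen.len h⟩

lemma EE_inj (p : Fin n) : Function.Injective (EE n p) :=
  fun _ _ h => (EE_inj2 n h).2

lemma EE_surj (x : M n) : ∃ p m, EE n p m = x := by
  induction x using WithOne.recOneCoe with
  | one => exact ⟨0, 0, by simp [EE, pw]⟩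
  | coe g =>
      obtain ⟨m, q⟩ := g
      by_cases hq : q = 0
      · subst hq
        exact ⟨0, m + 1, by simp [EE, pw]⟩
      · exact ⟨q, m, by simp [EE, hq]⟩

lemma term_eq (p : Fin n) (h : Polynomial k) :
    (Polynomial.aeval (sing k n 0 0) h : B k n) * (if p = 0 then 1 else sing k n 0 p)
      = MonoidAlgebra.ofCoeff (Finsupp.mapDomain (EE n p) h.toFinsupp.coeff) := by
  by_cases hp : p = 0
  · subst hp
    rw [if_pos rfl, mul_one, aeval_eq]
    have : EE n (0 : Fin n) = pw n := funext fun m => if_pos rfl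
    rw [this]
  · rw [if_neg hp]
    induction h using Polynomial.induction_on' with
    | add r s hr hs =>
        rw [map_add, add_mul, hr, hs, Polynomial.toFinsupp_add, AddMonoidAlgebra.coeff_add,
            Finsupp.mapDomain_add, MonoidAlgebra.ofCoeff_add]
    | monomial m c =>
        rw [Polynomial.aeval_monomial, Polynomial.toFinsupp_monomial,
          AddMonoidAlgebra.coeff_single, Finsupp.mapDomain_single, MonoidAlgebra.ofCoeff_single,
          mul_assoc, sing_pow_mul]
        show MonoidAlgebra.single 1 c * MonoidAlgebra.single (↑(Gen.mk (m + 0) p) : M n) 1 = _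
        rw [MonoidAlgebra.single_mul_single, one_mul, mul_one, Nat.add_zero]
        simp only [EE, if_neg hp]

lemma sum_apply_eval (g : Fin n → Polynomial k) (p : Fin n) (m : ℕ) :
    (∑ q, Finsupp.mapDomain (EE n q) (g q).toFinsupp.coeff) (EE n p m) = (g p).coeff m := by
  rw [Finsupp.finset_sum_apply, Finset.sum_eq_single p]
  · exact Finsupp.mapDomain_apply (EE_inj n p) _ m
  · intro q _ hq
    apply Finsupp.mapDomain_notin_range
    rintro ⟨l, hl⟩
    exact hq (EE_inj2 n hl).1
  · intro h
    exact absurd (Finset.mem_univ p) h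

lemma Bside (b : M n →₀ k) :
    ∃! g : Fin n → Polynomial k,
      b = ∑ q, Finsupp.mapDomain (EE n q) (g q).toFinsupp.coeff := by
  refine ⟨fun p => Polynomial.ofFinsupp (AddMonoidAlgebra.ofCoeff
      (Finsupp.comapDomain (EE n p) b ((EE_inj n p).injOn))), ?_, ?_⟩
  · apply Finsupp.ext
    intro x
    obtain ⟨p, m, rfl⟩ := EE_surj n x
    rw [sum_apply_eval]
    exact (Finsupp.comapDomain_apply (EE n p) b ((EE_inj n p).injOn) m).symm
  · intro g' hg'
    funext p
    apply Polynomial.ext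
    intro m
    have h1 : (∑ q, Finsupp.mapDomain (EE n q) (g' q).toFinsupp.coeff) (EE n p m)
        = (g' p).coeff m := sum_apply_eval k n g' p m
    rw [← hg'] at h1
    rw [← h1]
    exact (Finsupp.comapDomain_apply (EE n p) b ((EE_inj n p).injOn) m).symm

end Stmt8Aux

open Stmt8Aux in
/-- the subalgebra `R = k[x₁]` of `A = A(k,X,r_f)` is isomorphic to a
polynomial algebra in one variable (the evaluation map `k[t] → A`, `t ↦ x₁`, is
injective with range `k[x₁]`), and `A` is a free left `R`-module of rank `n` with
free basis `{1, x₂, …, xₙ}` (every `a ∈ A` has a unique representation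
`a = Σᵢ gᵢ(x₁)·vᵢ` with `v₀ = 1`, `vᵢ = xᵢ` for `i ≠ 0`). -/
theorem stmt_8 (k : Type*) [Field k] (n : ℕ) [NeZero n] (f : Equiv.Perm (Fin n)) :
    Function.Injective (Polynomial.aeval (xgen k n f 0) : Polynomial k →ₐ[k] YBA k n f) ∧
    (Polynomial.aeval (xgen k n f 0) : Polynomial k →ₐ[k] YBA k n f).range =
      Algebra.adjoin k {xgen k n f 0} ∧
    ∀ a : YBA k n f, ∃! g : Fin n → Polynomial k,
      a = ∑ i, Polynomial.aeval (xgen k n f 0) (g i) *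
        (if i = 0 then 1 else xgen k n f i) := by
  refine ⟨aeval_inj k n f, (Algebra.adjoin_singleton_eq_range_aeval k _).symm, ?_⟩
  intro a
  obtain ⟨g, hg, hu⟩ := Bside k n (phi k n f a).coeff
  have key : ∀ h : Fin n → Polynomial k,
      (phi k n f (∑ i, Polynomial.aeval (xgen k n f 0) (h i) *
          (if i = 0 then 1 else xgen k n f i))).coeff
        = ∑ i, Finsupp.mapDomain (EE n i) (h i).toFinsupp.coeff := by
    intro h
    rw [map_sum, MonoidAlgebra.coeff_sum]
    refine Finset.sum_congr rfl fun i _ => ?_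
    rw [map_mul, ← Polynomial.aeval_algHom_apply, phi_xgen, apply_ite (phi k n f),
      map_one, phi_xgen, term_eq, MonoidAlgebra.coeff_ofCoeff]
  refine ⟨g, ?_, ?_⟩
  · apply (phi k n f).injective
    apply MonoidAlgebra.coeff_injective
    rw [key]
    exact hg
  · intro g' hg'
    exact hu g' ((congrArg (fun x => (phi k n f x).coeff) hg').trans (key g'))

end
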